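/- Let G be a snake graph and D a double dimer cover of G, and let D_min be the minimal double dimer cover. Then the symmetric difference D ⊖ D_min consists of edges (single or double) enclosing sets of consecutive tiles of G, and its completion (D ⊖ D_min)^c is a snake sub-multigraph of the doubled graph of G (the multigraph obtained by superimposing two copies of G). -/

import Mathlib

/-! ### Snake graphs, dimer covers and double dimer covers -/

/-- Gluing direction for consecutive tiles of a snake graph. -/
inductive Dir : Type
  | east : Dir
  | north : Dir
deriving DecidableEq

/-- An (abstract) snake graph, encoded by the sequence of gluing directions:
tile `i+1` is glued to the East or North edge of tile `i`.  It has `dirs.length + 1`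
square tiles. -/
structure SnakeGraph : Type where
  dirs : List Dir

/-- An edge of the ambient square lattice: `(p, true)` is the horizontal edge joining `p`
and `p + (1,0)`, while `(p, false)` is the vertical edge joining `p` and `p + (0,1)`. -/
abbrev SnakeEdge : Type := (ℤ × ℤ) × Bool

namespace SnakeGraph

/-- The two endpoints of an edge. -/
def ends (e : SnakeEdge) : Finset (ℤ × ℤ) :=
  if e.2 then {e.1, (e.1.1 + 1, e.1.2)} else {e.1, (e.1.1, e.1.2 + 1)}

/-- South edge of the tile with bottom-left corner `p`. -/
def south (p : ℤ × ℤ) : SnakeEdge := (p, true)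
/-- North edge of the tile with bottom-left corner `p`. -/
def north (p : ℤ × ℤ) : SnakeEdge := ((p.1, p.2 + 1), true)
/-- West edge of the tile with bottom-left corner `p`. -/
def west (p : ℤ × ℤ) : SnakeEdge := (p, false)
/-- East edge of the tile with bottom-left corner `p`. -/
def east (p : ℤ × ℤ) : SnakeEdge := ((p.1 + 1, p.2), false)

/-- The four edges of the tile with bottom-left corner `p`. -/
def tileEdges (p : ℤ × ℤ) : Finset SnakeEdge := {south p, north p, west p, east p}

/-- The four vertices of the tile with bottom-left corner `p`. -/
def tileVertices (p : ℤ × ℤ) : Finset (ℤ × ℤ) :=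
  {p, (p.1 + 1, p.2), (p.1, p.2 + 1), (p.1 + 1, p.2 + 1)}

/-- The number of tiles of a snake graph. -/
def numTiles (G : SnakeGraph) : ℕ := G.dirs.length + 1

/-- The bottom-left corner of the `i`-th tile (`0`-based). -/
def pos (G : SnakeGraph) (i : ℕ) : ℤ × ℤ :=
  (((G.dirs.take i).count Dir.east : ℤ), ((G.dirs.take i).count Dir.north : ℤ))

/-- The (positions of the) tiles of `G`. -/
def tiles (G : SnakeGraph) : Finset (ℤ × ℤ) := (Finset.range G.numTiles).image G.pos

/-- The edge set of `G`. -/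
def edges (G : SnakeGraph) : Finset SnakeEdge := G.tiles.biUnion tileEdges

/-- The vertex set of `G`. -/
def vertices (G : SnakeGraph) : Finset (ℤ × ℤ) := G.tiles.biUnion tileVertices

/-- The boundary edges of `G`: edges belonging to exactly one tile.  The remaining
edges (shared by two adjacent tiles) are the interior edges. -/
def boundaryEdges (G : SnakeGraph) : Finset SnakeEdge :=
  G.edges.filter fun e => (G.tiles.filter fun p => e ∈ tileEdges p).card = 1

/-- The edges of the sub-snake graph on the consecutive tiles `a, a+1, …, b` of `G`. -/
def intervalEdges (G : SnakeGraph) (a b : ℕ) : Finset SnakeEdge :=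
  (Finset.Icc a b).biUnion fun i => tileEdges (G.pos i)

/-- The vertices of the sub-snake graph on tiles `a, …, b`. -/
def intervalVertices (G : SnakeGraph) (a b : ℕ) : Finset (ℤ × ℤ) :=
  (Finset.Icc a b).biUnion fun i => tileVertices (G.pos i)

/-- The boundary edges of the sub-snake graph on tiles `a, …, b`. -/
def intervalBoundaryEdges (G : SnakeGraph) (a b : ℕ) : Finset SnakeEdge :=
  (G.intervalEdges a b).filter fun e =>
    ((Finset.Icc a b).filter fun i => e ∈ tileEdges (G.pos i)).card = 1

/-- A perfect matching (dimer cover) of the sub-snake graph on tiles `a, …, b`: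
every vertex is incident to exactly one chosen edge. -/
def IsPerfectMatchingOn (G : SnakeGraph) (a b : ℕ) (P : Finset SnakeEdge) : Prop :=
  P ⊆ G.intervalEdges a b ∧
    ∀ v ∈ G.intervalVertices a b, (P.filter fun e => v ∈ ends e).card = 1

/-- A perfect matching (dimer cover) of `G`. -/
def IsPerfectMatching (G : SnakeGraph) (P : Finset SnakeEdge) : Prop :=
  G.IsPerfectMatchingOn 0 (G.numTiles - 1) P

/-- The minimal matching of the sub-snake graph on tiles `a, …, b`: the boundary
perfect matching containing the West edge of its first tile. -/
def IsMinimalMatchingOn (G : SnakeGraph) (a b : ℕ) (P : Finset SnakeEdge) : Prop :=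
  G.IsPerfectMatchingOn a b P ∧ P ⊆ G.intervalBoundaryEdges a b ∧ west (G.pos a) ∈ P

/-- The maximal matching of the sub-snake graph on tiles `a, …, b`: the boundary
perfect matching complementary to the minimal one (it does not contain the West edge
of the first tile). -/
def IsMaximalMatchingOn (G : SnakeGraph) (a b : ℕ) (P : Finset SnakeEdge) : Prop :=
  G.IsPerfectMatchingOn a b P ∧ P ⊆ G.intervalBoundaryEdges a b ∧ west (G.pos a) ∉ P

/-- The minimal matching of `G`. -/
def IsMinimalMatching (G : SnakeGraph) (P : Finset SnakeEdge) : Prop :=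
  G.IsMinimalMatchingOn 0 (G.numTiles - 1) P

/-- The maximal matching of `G`. -/
def IsMaximalMatching (G : SnakeGraph) (P : Finset SnakeEdge) : Prop :=
  G.IsMaximalMatchingOn 0 (G.numTiles - 1) P

/-- A `d`-dimer cover of `G`: a multiset of edges of `G` in which every vertex of `G` is
incident to exactly `d` edges, counted with multiplicity. -/
def IsDDimerCover (G : SnakeGraph) (d : ℕ) (D : Multiset SnakeEdge) : Prop :=
  (∀ e ∈ D, e ∈ G.edges) ∧
    ∀ v ∈ G.vertices, Multiset.card (D.filter fun e => v ∈ ends e) = d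

/-- A double dimer cover of `G`. -/
def IsDoubleDimerCover (G : SnakeGraph) (D : Multiset SnakeEdge) : Prop :=
  G.IsDDimerCover 2 D

/-- Two copies of each edge of a set of edges. -/
def doubled (P : Finset SnakeEdge) : Multiset SnakeEdge := P.val + P.val

/-- The symmetric difference of two multisets of edges: `(D ∪ D') \ (D ∩ D')`, the union
taking maximal multiplicities and the intersection minimal ones. -/
def symmDiff (D D' : Multiset SnakeEdge) : Multiset SnakeEdge := (D ∪ D') - (D ∩ D')

/-- The boundary edges of the tile at position `p` (edges of the tile that are boundary
edges of `G`). -/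
def tileBoundary (G : SnakeGraph) (p : ℤ × ℤ) : Finset SnakeEdge :=
  tileEdges p ∩ G.boundaryEdges

/-- The completion `H^c` of a sub-multigraph `H` of (doubled) `G`: add a single copy of
each missing edge of every tile having at least one boundary edge in `H`. -/
def completion (G : SnakeGraph) (H : Multiset SnakeEdge) : Multiset SnakeEdge :=
  H + (G.edges.filter fun e =>
    e ∉ H ∧ ∃ p ∈ G.tiles, e ∈ tileEdges p ∧ ∃ e' ∈ G.tileBoundary p, e' ∈ H).val

/-- `H` is a snake sub-multigraph of the doubled graph of `G`: every edge occurs with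
multiplicity at most `2`, and the underlying simple graph is a disjoint union of
sub-snake graphs of `G` on (pairwise non-adjacent) sets of consecutive tiles — i.e.
each connected component is a snake (multi)graph. -/
def IsSnakeSubMultigraph (G : SnakeGraph) (H : Multiset SnakeEdge) : Prop :=
  (∀ e, H.count e ≤ 2) ∧
    ∃ S : Finset (ℕ × ℕ),
      (∀ p ∈ S, p.1 ≤ p.2 ∧ p.2 < G.numTiles) ∧
      (∀ p ∈ S, ∀ q ∈ S, p ≠ q → p.2 + 1 < q.1 ∨ q.2 + 1 < p.1) ∧
      H.toFinset = S.biUnion fun p => G.intervalEdges p.1 p.2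

end SnakeGraph

namespace SnakeGraph

lemma count_east_add_count_north (l : List Dir) :
    l.count Dir.east + l.count Dir.north = l.length := by
  induction l with
  | nil => simp
  | cons d t ih => cases d <;> simp [List.count_cons, ← ih] <;> omega

/-- whether the `i`-th gluing step goes east -/
def stepE (G : SnakeGraph) (i : ℕ) : Prop := G.dirs.getD i Dir.east = Dir.east

instance (G : SnakeGraph) (i : ℕ) : Decidable (G.stepE i) := by
  unfold stepE; infer_instance

variable (G : SnakeGraph)

lemma pos_sum {i : ℕ} (h : i ≤ G.dirs.length) : (G.pos i).1 + (G.pos i).2 = (i : ℤ) := by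
  have h1 := count_east_add_count_north (G.dirs.take i)
  have h2 : (G.dirs.take i).length = i := by
    rw [List.length_take]; omega
  simp only [pos]
  rw [h2] at h1
  push_cast
  omega

lemma pos_nonneg (i : ℕ) : 0 ≤ (G.pos i).1 ∧ 0 ≤ (G.pos i).2 := by
  simp [pos]

lemma pos_zero : G.pos 0 = (0, 0) := by simp [pos]

lemma pos_succ {i : ℕ} (h : i < G.dirs.length) :
    G.pos (i + 1) = if G.stepE i then ((G.pos i).1 + 1, (G.pos i).2)
      else ((G.pos i).1, (G.pos i).2 + 1) := by
  have htake : G.dirs.take (i + 1) = G.dirs.take i ++ [G.dirs.getD i Dir.east] := by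
    rw [List.take_succ, List.getElem?_eq_getElem h, List.getD_eq_getElem G.dirs Dir.east h]
    simp
  rcases hd : G.dirs.getD i Dir.east with _ | _ <;>
  · simp only [pos, htake, hd, List.count_append, stepE, Prod.ext_iff]
    constructor <;> simp <;> push_cast <;> omega

end SnakeGraph

namespace SnakeGraph

variable (G : SnakeGraph)

lemma lt_numTiles_iff {i : ℕ} : i + 1 < G.numTiles ↔ i < G.dirs.length := by
  simp [numTiles]

lemma pos_succ_east {i : ℕ} (h : i + 1 < G.numTiles) (he : G.stepE i) :
    G.pos (i + 1) = ((G.pos i).1 + 1, (G.pos i).2) := by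
  rw [pos_succ G ((G.lt_numTiles_iff).1 h), if_pos he]

lemma pos_succ_north {i : ℕ} (h : i + 1 < G.numTiles) (he : ¬ G.stepE i) :
    G.pos (i + 1) = ((G.pos i).1, (G.pos i).2 + 1) := by
  rw [pos_succ G ((G.lt_numTiles_iff).1 h), if_neg he]

lemma mem_tiles {p : ℤ × ℤ} : p ∈ G.tiles ↔ ∃ i, i < G.numTiles ∧ G.pos i = p := by
  simp [tiles, Finset.mem_image, Finset.mem_range]

lemma pos_sum' {i : ℕ} (h : i < G.numTiles) : (G.pos i).1 + (G.pos i).2 = (i : ℤ) := by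
  apply G.pos_sum; simp [numTiles] at h; omega

lemma tiles_nonneg {p : ℤ × ℤ} (h : p ∈ G.tiles) : 0 ≤ p.1 ∧ 0 ≤ p.2 := by
  rw [mem_tiles] at h
  obtain ⟨i, _, rfl⟩ := h
  exact G.pos_nonneg i

/-- if a point with coordinate sum `i` is a tile, it is tile `i` -/
lemma tile_eq_of_sum {p : ℤ × ℤ} {i : ℕ} (hi : i < G.numTiles)
    (hs : p.1 + p.2 = (i : ℤ)) (h : p ∈ G.tiles) : G.pos i = p := by
  rw [mem_tiles] at h
  obtain ⟨j, hj, rfl⟩ := h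
  have := G.pos_sum' hj
  have : j = i := by omega
  subst this; rfl

lemma east_nb_iff {i : ℕ} (hi : i < G.numTiles) :
    ((G.pos i).1 + 1, (G.pos i).2) ∈ G.tiles ↔ (i + 1 < G.numTiles ∧ G.stepE i) := by
  constructor
  · intro h
    have hs := G.pos_sum' hi
    rw [mem_tiles] at h
    obtain ⟨j, hj, hp⟩ := h
    have hsj := G.pos_sum' hj
    have hji : j = i + 1 := by
      have h1 := congrArg Prod.fst hp
      have h2 := congrArg Prod.snd hp
      simp at h1 h2
      omega
    subst hji
    refine ⟨hj, ?_⟩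
    by_contra he
    rw [G.pos_succ_north hj he] at hp
    have h1 := congrArg Prod.fst hp
    simp at h1
  · rintro ⟨h1, h2⟩
    rw [mem_tiles]
    exact ⟨i + 1, h1, G.pos_succ_east h1 h2⟩

lemma north_nb_iff {i : ℕ} (hi : i < G.numTiles) :
    ((G.pos i).1, (G.pos i).2 + 1) ∈ G.tiles ↔ (i + 1 < G.numTiles ∧ ¬ G.stepE i) := by
  constructor
  · intro h
    have hs := G.pos_sum' hi
    rw [mem_tiles] at h
    obtain ⟨j, hj, hp⟩ := h
    have hsj := G.pos_sum' hj
    have hji : j = i + 1 := by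
      have h1 := congrArg Prod.fst hp
      have h2 := congrArg Prod.snd hp
      simp at h1 h2
      omega
    subst hji
    refine ⟨hj, ?_⟩
    intro he
    rw [G.pos_succ_east hj he] at hp
    have h1 := congrArg Prod.fst hp
    simp at h1
  · rintro ⟨h1, h2⟩
    rw [mem_tiles]
    exact ⟨i + 1, h1, G.pos_succ_north h1 h2⟩

lemma pos_pred_east {i : ℕ} (hi : i < G.numTiles) (h0 : 0 < i) (he : G.stepE (i - 1)) :
    G.pos (i - 1) = ((G.pos i).1 - 1, (G.pos i).2) := by
  obtain ⟨j, rfl⟩ : ∃ j, i = j + 1 := ⟨i - 1, by omega⟩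
  simp only [Nat.add_sub_cancel] at he ⊢
  rw [G.pos_succ_east hi he]
  simp

lemma pos_pred_north {i : ℕ} (hi : i < G.numTiles) (h0 : 0 < i) (he : ¬ G.stepE (i - 1)) :
    G.pos (i - 1) = ((G.pos i).1, (G.pos i).2 - 1) := by
  obtain ⟨j, rfl⟩ : ∃ j, i = j + 1 := ⟨i - 1, by omega⟩
  simp only [Nat.add_sub_cancel] at he ⊢
  rw [G.pos_succ_north hi he]
  simp

lemma west_nb_iff {i : ℕ} (hi : i < G.numTiles) :
    ((G.pos i).1 - 1, (G.pos i).2) ∈ G.tiles ↔ (0 < i ∧ G.stepE (i - 1)) := by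
  constructor
  · intro h
    have hs := G.pos_sum' hi
    rw [mem_tiles] at h
    obtain ⟨j, hj, hp⟩ := h
    have hsj := G.pos_sum' hj
    have h1 := congrArg Prod.fst hp
    have h2 := congrArg Prod.snd hp
    simp at h1 h2
    have h0 : 0 < i := by omega
    have hji : j = i - 1 := by omega
    subst hji
    refine ⟨h0, ?_⟩
    by_contra he
    rw [G.pos_pred_north hi h0 he] at h1
    omega
  · rintro ⟨h0, he⟩
    rw [mem_tiles]
    exact ⟨i - 1, by omega, G.pos_pred_east hi h0 he⟩

lemma south_nb_iff {i : ℕ} (hi : i < G.numTiles) :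
    ((G.pos i).1, (G.pos i).2 - 1) ∈ G.tiles ↔ (0 < i ∧ ¬ G.stepE (i - 1)) := by
  constructor
  · intro h
    have hs := G.pos_sum' hi
    rw [mem_tiles] at h
    obtain ⟨j, hj, hp⟩ := h
    have hsj := G.pos_sum' hj
    have h1 := congrArg Prod.fst hp
    have h2 := congrArg Prod.snd hp
    simp at h1 h2
    have h0 : 0 < i := by omega
    have hji : j = i - 1 := by omega
    subst hji
    refine ⟨h0, ?_⟩
    intro he
    rw [G.pos_pred_east hi h0 he] at h1
    simp at h1
  · rintro ⟨h0, he⟩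
    rw [mem_tiles]
    exact ⟨i - 1, by omega, G.pos_pred_north hi h0 he⟩

lemma diag1_not_tile {i : ℕ} (hi : i < G.numTiles) :
    ((G.pos i).1 + 1, (G.pos i).2 - 1) ∉ G.tiles := by
  intro h
  have hs := G.pos_sum' hi
  have := G.tile_eq_of_sum hi (by simp; omega) h
  have h1 := congrArg Prod.fst this
  simp at h1

lemma diag2_not_tile {i : ℕ} (hi : i < G.numTiles) :
    ((G.pos i).1 - 1, (G.pos i).2 + 1) ∉ G.tiles := by
  intro h
  have hs := G.pos_sum' hi
  have := G.tile_eq_of_sum hi (by simp; omega) h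
  have h1 := congrArg Prod.fst this
  simp at h1
  omega

lemma mem_tileEdges_horiz {p : ℤ × ℤ} {a b : ℤ} :
    (((a, b), true) : SnakeEdge) ∈ tileEdges p ↔ p = (a, b) ∨ p = (a, b - 1) := by
  simp [tileEdges, south, north, west, east, Prod.ext_iff]
  omega

lemma mem_tileEdges_vert {p : ℤ × ℤ} {a b : ℤ} :
    (((a, b), false) : SnakeEdge) ∈ tileEdges p ↔ p = (a, b) ∨ p = (a - 1, b) := by
  simp [tileEdges, south, north, west, east, Prod.ext_iff]
  omega

lemma mem_edges_horiz {a b : ℤ} :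
    (((a, b), true) : SnakeEdge) ∈ G.edges ↔ (a, b) ∈ G.tiles ∨ (a, b - 1) ∈ G.tiles := by
  simp only [edges, Finset.mem_biUnion]
  constructor
  · rintro ⟨p, hp, hm⟩
    rcases mem_tileEdges_horiz.1 hm with rfl | rfl
    · exact Or.inl hp
    · exact Or.inr hp
  · rintro (h | h)
    · exact ⟨_, h, mem_tileEdges_horiz.2 (Or.inl rfl)⟩
    · exact ⟨_, h, mem_tileEdges_horiz.2 (Or.inr rfl)⟩

lemma mem_edges_vert {a b : ℤ} :
    (((a, b), false) : SnakeEdge) ∈ G.edges ↔ (a, b) ∈ G.tiles ∨ (a - 1, b) ∈ G.tiles := by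
  simp only [edges, Finset.mem_biUnion]
  constructor
  · rintro ⟨p, hp, hm⟩
    rcases mem_tileEdges_vert.1 hm with rfl | rfl
    · exact Or.inl hp
    · exact Or.inr hp
  · rintro (h | h)
    · exact ⟨_, h, mem_tileEdges_vert.2 (Or.inl rfl)⟩
    · exact ⟨_, h, mem_tileEdges_vert.2 (Or.inr rfl)⟩

lemma mem_edges_iff {e : SnakeEdge} :
    e ∈ G.edges ↔ ∃ i, i < G.numTiles ∧ e ∈ tileEdges (G.pos i) := by
  simp only [edges, Finset.mem_biUnion, mem_tiles]
  constructor
  · rintro ⟨p, ⟨i, hi, rfl⟩, hm⟩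
    exact ⟨i, hi, hm⟩
  · rintro ⟨i, hi, hm⟩
    exact ⟨_, ⟨i, hi, rfl⟩, hm⟩

end SnakeGraph

namespace SnakeGraph

variable (G : SnakeGraph)

lemma Icc_zero_numTiles : Finset.Icc 0 (G.numTiles - 1) = Finset.range G.numTiles := by
  ext k
  simp [numTiles]

lemma intervalEdges_full : G.intervalEdges 0 (G.numTiles - 1) = G.edges := by
  rw [intervalEdges, Icc_zero_numTiles, edges, tiles, Finset.image_biUnion]

lemma intervalVertices_full : G.intervalVertices 0 (G.numTiles - 1) = G.vertices := by
  rw [intervalVertices, Icc_zero_numTiles, vertices, tiles, Finset.image_biUnion]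

lemma mem_ends_iff {v : ℤ × ℤ} {e : SnakeEdge} :
    v ∈ ends e ↔ (e = ((v, true) : SnakeEdge) ∨ e = (((v.1 - 1, v.2), true) : SnakeEdge) ∨
      e = ((v, false) : SnakeEdge) ∨ e = (((v.1, v.2 - 1), false) : SnakeEdge)) := by
  obtain ⟨⟨a, b⟩, bl⟩ := e
  cases bl <;> simp [ends, Prod.ext_iff] <;> omega

/-- counting a multiset filter over the four candidate edges -/
lemma card_filter_four (s : Multiset SnakeEdge) (v : ℤ × ℤ) :
    Multiset.card (s.filter fun e => v ∈ ends e) =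
      s.count ((v, true) : SnakeEdge) + s.count (((v.1 - 1, v.2), true) : SnakeEdge) +
      s.count ((v, false) : SnakeEdge) + s.count (((v.1, v.2 - 1), false) : SnakeEdge) := by
  induction s using Multiset.induction with
  | empty => simp
  | cons a s ih =>
    by_cases pa : v ∈ ends a
    · rw [Multiset.filter_cons, if_pos pa]
      rcases mem_ends_iff.1 pa with rfl | rfl | rfl | rfl <;>
        simp [Multiset.count_cons, ih, Prod.ext_iff] <;> first | omega | (split_ifs <;> omega)
    · rw [Multiset.filter_cons, if_neg pa]
      have h4 := mem_ends_iff.not.1 pa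
      push_neg at h4
      obtain ⟨n1, n2, n3, n4⟩ := h4
      simp [Multiset.count_cons, ih, Ne.symm n1, Ne.symm n2, Ne.symm n3, Ne.symm n4]

/-- the net flow at an edge: multiplicity in `D` minus multiplicity in the doubled
minimal matching -/
def gg (D : Multiset SnakeEdge) (Pmin : Finset SnakeEdge) (e : SnakeEdge) : ℤ :=
  (D.count e : ℤ) - (if e ∈ Pmin then 2 else 0)

variable (D : Multiset SnakeEdge) (Pmin : Finset SnakeEdge)

lemma count_val_eq (e : SnakeEdge) :
    Pmin.val.count e = if e ∈ Pmin then 1 else 0 := by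
  by_cases h : e ∈ Pmin
  · rw [if_pos h]
    exact Multiset.count_eq_one_of_mem Pmin.nodup h
  · rw [if_neg h]
    exact Multiset.count_eq_zero_of_notMem h

lemma vertex_sum (hD : G.IsDoubleDimerCover D) (hP : G.IsPerfectMatching Pmin)
    {v : ℤ × ℤ} (hv : v ∈ G.vertices) :
    gg D Pmin ((v, true) : SnakeEdge) + gg D Pmin (((v.1 - 1, v.2), true) : SnakeEdge) +
      gg D Pmin ((v, false) : SnakeEdge) + gg D Pmin (((v.1, v.2 - 1), false) : SnakeEdge)
      = 0 := by
  have hd2 := hD.2 v hv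
  rw [card_filter_four] at hd2
  have hv' : v ∈ G.intervalVertices 0 (G.numTiles - 1) := by
    rw [G.intervalVertices_full]; exact hv
  have hp2 := hP.2 v hv'
  have : (Pmin.filter fun e => v ∈ ends e).card
      = Multiset.card (Pmin.val.filter fun e => v ∈ ends e) := rfl
  rw [hp2] at this
  rw [card_filter_four, count_val_eq, count_val_eq, count_val_eq, count_val_eq] at this
  simp only [gg]
  split_ifs at this ⊢ <;> push_cast <;> omega

lemma gg_eq_zero (hD : G.IsDoubleDimerCover D) (hP : G.IsPerfectMatching Pmin)
    {e : SnakeEdge} (he : e ∉ G.edges) : gg D Pmin e = 0 := by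
  have h1 : D.count e = 0 := by
    rw [Multiset.count_eq_zero]
    intro hm
    exact he (hD.1 e hm)
  have h2 : e ∉ Pmin := by
    intro hm
    exact he (G.intervalEdges_full ▸ hP.1 hm)
  simp [gg, h1, h2]

end SnakeGraph

namespace SnakeGraph

/-- the height function on tiles -/
def ht (G : SnakeGraph) (D : Multiset SnakeEdge) (Pmin : Finset SnakeEdge) : ℕ → ℤ
  | 0 => - gg D Pmin (west (G.pos 0))
  | (i+1) => ht G D Pmin i + (if G.stepE i
      then ((-1)^i : ℤ) * gg D Pmin (east (G.pos i))
      else -((-1)^i : ℤ) * gg D Pmin (north (G.pos i)))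

/-- height of the face west of tile `i` -/
def nbW (G : SnakeGraph) (D : Multiset SnakeEdge) (Pmin : Finset SnakeEdge) (i : ℕ) : ℤ :=
  if 0 < i ∧ G.stepE (i - 1) then ht G D Pmin (i - 1) else 0

/-- height of the face south of tile `i` -/
def nbS (G : SnakeGraph) (D : Multiset SnakeEdge) (Pmin : Finset SnakeEdge) (i : ℕ) : ℤ :=
  if 0 < i ∧ ¬ G.stepE (i - 1) then ht G D Pmin (i - 1) else 0

/-- height of the face east of tile `i` -/
def nbE (G : SnakeGraph) (D : Multiset SnakeEdge) (Pmin : Finset SnakeEdge) (i : ℕ) : ℤ :=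
  if i + 1 < G.numTiles ∧ G.stepE i then ht G D Pmin (i + 1) else 0

/-- height of the face north of tile `i` -/
def nbN (G : SnakeGraph) (D : Multiset SnakeEdge) (Pmin : Finset SnakeEdge) (i : ℕ) : ℤ :=
  if i + 1 < G.numTiles ∧ ¬ G.stepE i then ht G D Pmin (i + 1) else 0

variable (G : SnakeGraph) (D : Multiset SnakeEdge) (Pmin : Finset SnakeEdge)

lemma eq_SW0 (hD : G.IsDoubleDimerCover D) (hP : G.IsPerfectMatching Pmin) :
    gg D Pmin (south (G.pos 0)) + gg D Pmin (west (G.pos 0)) = 0 := by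
  have h0 : (0:ℕ) < G.numTiles := by simp [numTiles]
  have hv : (((0:ℤ), (0:ℤ)) : ℤ × ℤ) ∈ G.vertices := by
    simp only [vertices, Finset.mem_biUnion]
    refine ⟨G.pos 0, (G.mem_tiles).2 ⟨0, h0, rfl⟩, ?_⟩
    rw [G.pos_zero]; simp [tileVertices]
  have key := G.vertex_sum D Pmin hD hP hv
  dsimp only at key
  have hz1 : gg D Pmin (((((0:ℤ) - 1, (0:ℤ))), true) : SnakeEdge) = 0 := by
    refine G.gg_eq_zero D Pmin hD hP (fun hmem => ?_)
    rw [G.mem_edges_horiz] at hmem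
    rcases hmem with h | h <;>
    · have h2 := (G.tiles_nonneg h).1
      simp at h2
  have hz2 : gg D Pmin ((((0:ℤ), (0:ℤ) - 1)), false) = 0 := by
    refine G.gg_eq_zero D Pmin hD hP (fun hmem => ?_)
    rw [G.mem_edges_vert] at hmem
    rcases hmem with h | h
    · have h2 := (G.tiles_nonneg h).2
      simp at h2
    · have h2 := (G.tiles_nonneg h).1
      simp at h2
  rw [hz1, hz2] at key
  rw [G.pos_zero]
  simp only [south, west]
  linarith [key]

lemma eq_SE (hD : G.IsDoubleDimerCover D) (hP : G.IsPerfectMatching Pmin)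
    {i : ℕ} (hi : i < G.numTiles) :
    gg D Pmin (south (G.pos i)) + gg D Pmin (east (G.pos i))
      + (if i + 1 < G.numTiles ∧ G.stepE i then gg D Pmin (south (G.pos (i+1))) else 0)
      + (if 0 < i ∧ ¬ G.stepE (i-1) then gg D Pmin (east (G.pos (i-1))) else 0) = 0 := by
  have hv : (((G.pos i).1 + 1, (G.pos i).2) : ℤ × ℤ) ∈ G.vertices := by
    simp only [vertices, Finset.mem_biUnion]
    exact ⟨G.pos i, (G.mem_tiles).2 ⟨i, hi, rfl⟩, by simp [tileVertices]⟩
  have key := G.vertex_sum D Pmin hD hP hv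
  dsimp only at key
  rw [show ((G.pos i).1 + 1 - 1 : ℤ) = (G.pos i).1 by ring] at key
  simp only [Prod.mk.eta] at key
  have h1 : (if i + 1 < G.numTiles ∧ G.stepE i then gg D Pmin (south (G.pos (i+1))) else 0)
      = gg D Pmin (((((G.pos i).1 + 1, (G.pos i).2)), true) : SnakeEdge) := by
    by_cases hc : i + 1 < G.numTiles ∧ G.stepE i
    · rw [if_pos hc, G.pos_succ_east hc.1 hc.2]; rfl
    · rw [if_neg hc]
      refine (G.gg_eq_zero D Pmin hD hP (fun hmem => ?_)).symm
      rw [G.mem_edges_horiz] at hmem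
      rcases hmem with h | h
      · exact hc ((G.east_nb_iff hi).1 h)
      · exact G.diag1_not_tile hi h
  have h4 : (if 0 < i ∧ ¬ G.stepE (i-1) then gg D Pmin (east (G.pos (i-1))) else 0)
      = gg D Pmin (((((G.pos i).1 + 1, (G.pos i).2 - 1)), false) : SnakeEdge) := by
    by_cases hc : 0 < i ∧ ¬ G.stepE (i-1)
    · rw [if_pos hc]
      have hp := G.pos_pred_north hi hc.1 hc.2
      rw [show east (G.pos (i-1)) = (((G.pos (i-1)).1 + 1, (G.pos (i-1)).2), false) from rfl, hp]
    · rw [if_neg hc]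
      refine (G.gg_eq_zero D Pmin hD hP (fun hmem => ?_)).symm
      rw [G.mem_edges_vert] at hmem
      rcases hmem with h | h
      · exact G.diag1_not_tile hi h
      · rw [show ((G.pos i).1 + 1 - 1 : ℤ) = (G.pos i).1 by ring] at h
        exact hc ((G.south_nb_iff hi).1 h)
  rw [h1, h4]
  simp only [south, east]
  linarith [key]

lemma eq_NW (hD : G.IsDoubleDimerCover D) (hP : G.IsPerfectMatching Pmin)
    {i : ℕ} (hi : i < G.numTiles) :
    gg D Pmin (north (G.pos i)) + gg D Pmin (west (G.pos i))
      + (if 0 < i ∧ G.stepE (i-1) then gg D Pmin (north (G.pos (i-1))) else 0)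
      + (if i + 1 < G.numTiles ∧ ¬ G.stepE i then gg D Pmin (west (G.pos (i+1))) else 0)
      = 0 := by
  have hv : (((G.pos i).1, (G.pos i).2 + 1) : ℤ × ℤ) ∈ G.vertices := by
    simp only [vertices, Finset.mem_biUnion]
    exact ⟨G.pos i, (G.mem_tiles).2 ⟨i, hi, rfl⟩, by simp [tileVertices]⟩
  have key := G.vertex_sum D Pmin hD hP hv
  dsimp only at key
  rw [show ((G.pos i).2 + 1 - 1 : ℤ) = (G.pos i).2 by ring] at key
  simp only [Prod.mk.eta] at key
  have h2 : (if 0 < i ∧ G.stepE (i-1) then gg D Pmin (north (G.pos (i-1))) else 0)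
      = gg D Pmin (((((G.pos i).1 - 1, (G.pos i).2 + 1)), true) : SnakeEdge) := by
    by_cases hc : 0 < i ∧ G.stepE (i-1)
    · rw [if_pos hc]
      have hp := G.pos_pred_east hi hc.1 hc.2
      rw [show north (G.pos (i-1)) = (((G.pos (i-1)).1, (G.pos (i-1)).2 + 1), true) from rfl, hp]
    · rw [if_neg hc]
      refine (G.gg_eq_zero D Pmin hD hP (fun hmem => ?_)).symm
      rw [G.mem_edges_horiz] at hmem
      rcases hmem with h | h
      · exact G.diag2_not_tile hi h
      · rw [show ((G.pos i).2 + 1 - 1 : ℤ) = (G.pos i).2 by ring] at h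
        exact hc ((G.west_nb_iff hi).1 h)
  have h3 : (if i + 1 < G.numTiles ∧ ¬ G.stepE i then gg D Pmin (west (G.pos (i+1))) else 0)
      = gg D Pmin (((((G.pos i).1, (G.pos i).2 + 1)), false) : SnakeEdge) := by
    by_cases hc : i + 1 < G.numTiles ∧ ¬ G.stepE i
    · rw [if_pos hc, G.pos_succ_north hc.1 hc.2]; rfl
    · rw [if_neg hc]
      refine (G.gg_eq_zero D Pmin hD hP (fun hmem => ?_)).symm
      rw [G.mem_edges_vert] at hmem
      rcases hmem with h | h
      · exact hc ((G.north_nb_iff hi).1 h)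
      · exact G.diag2_not_tile hi h
  rw [h2, h3]
  simp only [north, west]
  linarith [key]

end SnakeGraph

namespace SnakeGraph

variable (G : SnakeGraph) (D : Multiset SnakeEdge) (Pmin : Finset SnakeEdge)

lemma main_lemma (hD : G.IsDoubleDimerCover D) (hP : G.IsPerfectMatching Pmin) :
    ∀ i, i < G.numTiles →
      gg D Pmin (west (G.pos i)) = (-1)^i * (nbW G D Pmin i - ht G D Pmin i) ∧
      gg D Pmin (south (G.pos i)) = (-1)^i * (ht G D Pmin i - nbS G D Pmin i) ∧
      gg D Pmin (east (G.pos i)) = (-1)^i * (nbE G D Pmin i - ht G D Pmin i) ∧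
      gg D Pmin (north (G.pos i)) = (-1)^i * (ht G D Pmin i - nbN G D Pmin i) := by
  intro i
  induction i using Nat.strong_induction_on with
  | _ i IH =>
  intro hi
  have hW : gg D Pmin (west (G.pos i)) = (-1)^i * (nbW G D Pmin i - ht G D Pmin i) := by
    rcases i with _ | j
    · simp [nbW, ht]
    · by_cases hs : G.stepE j
      · have hp := G.pos_succ_east hi hs
        have he : west (G.pos (j+1)) = east (G.pos j) := by rw [hp]; rfl
        have hIH := IH j (by omega) (by omega)
        rw [he, hIH.2.2.1]
        have h1 : nbE G D Pmin j = ht G D Pmin (j+1) := by simp [nbE, hi, hs]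
        have h2 : nbW G D Pmin (j+1) = ht G D Pmin j := by simp [nbW, hs]
        rw [h1, h2]
        ring
      · have hj : j < G.numTiles := by omega
        have key := G.eq_NW D Pmin hD hP hj
        rw [if_pos (show j + 1 < G.numTiles ∧ ¬ G.stepE j from ⟨hi, hs⟩)] at key
        have hIH := IH j (by omega) hj
        rw [hIH.2.2.2, hIH.1] at key
        have h1 : nbN G D Pmin j = ht G D Pmin (j+1) := by simp [nbN, hi, hs]
        rw [h1] at key
        have h2 : nbW G D Pmin (j+1) = 0 := by simp [nbW, hs]
        rw [h2]
        by_cases hg : 0 < j ∧ G.stepE (j-1)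
        · rw [if_pos hg] at key
          obtain ⟨k, rfl⟩ : ∃ k, j = k + 1 := ⟨j - 1, by omega⟩
          simp only [Nat.add_sub_cancel] at key hg
          have hk := hg.2
          have hIH2 := IH k (by omega) (by omega)
          rw [hIH2.2.2.2] at key
          have h3 : nbN G D Pmin k = 0 := by simp [nbN, hk]
          have h4 : nbW G D Pmin (k+1) = ht G D Pmin k := by simp [nbW, hk]
          rw [h3, h4] at key
          linear_combination key
        · rw [if_neg hg] at key
          have h4 : nbW G D Pmin j = 0 := by simp only [nbW, if_neg hg]
          rw [h4] at key
          linear_combination key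
  have hS : gg D Pmin (south (G.pos i)) = (-1)^i * (ht G D Pmin i - nbS G D Pmin i) := by
    rcases i with _ | j
    · have hnb : nbS G D Pmin 0 = 0 := by simp [nbS]
      have hh : ht G D Pmin 0 = - gg D Pmin (west (G.pos 0)) := rfl
      rw [hnb, hh, pow_zero]
      linarith [G.eq_SW0 D Pmin hD hP]
    · by_cases hs : G.stepE j
      · have hj : j < G.numTiles := by omega
        have key := G.eq_SE D Pmin hD hP hj
        rw [if_pos (show j + 1 < G.numTiles ∧ G.stepE j from ⟨hi, hs⟩)] at key
        have hIH := IH j (by omega) hj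
        rw [hIH.2.1, hIH.2.2.1] at key
        have h1 : nbE G D Pmin j = ht G D Pmin (j+1) := by simp [nbE, hi, hs]
        rw [h1] at key
        have h2 : nbS G D Pmin (j+1) = 0 := by simp [nbS, hs]
        rw [h2]
        by_cases hg : 0 < j ∧ ¬ G.stepE (j-1)
        · rw [if_pos hg] at key
          obtain ⟨k, rfl⟩ : ∃ k, j = k + 1 := ⟨j - 1, by omega⟩
          simp only [Nat.add_sub_cancel] at key hg
          have hk := hg.2
          have hIH2 := IH k (by omega) (by omega)
          rw [hIH2.2.2.1] at key
          have h3 : nbE G D Pmin k = 0 := by simp [nbE, hk]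
          have h4 : nbS G D Pmin (k+1) = ht G D Pmin k := by simp [nbS, hk]
          rw [h3, h4] at key
          linear_combination key
        · rw [if_neg hg] at key
          have h4 : nbS G D Pmin j = 0 := by simp only [nbS, if_neg hg]
          rw [h4] at key
          linear_combination key
      · have hp := G.pos_succ_north hi hs
        have he : south (G.pos (j+1)) = north (G.pos j) := by rw [hp]; rfl
        have hIH := IH j (by omega) (by omega)
        rw [he, hIH.2.2.2]
        have h1 : nbN G D Pmin j = ht G D Pmin (j+1) := by simp [nbN, hi, hs]
        have h2 : nbS G D Pmin (j+1) = ht G D Pmin j := by simp [nbS, hs]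
        rw [h1, h2]
        ring
  have hE : gg D Pmin (east (G.pos i)) = (-1)^i * (nbE G D Pmin i - ht G D Pmin i) := by
    by_cases hg : i + 1 < G.numTiles ∧ G.stepE i
    · have h1 : nbE G D Pmin i = ht G D Pmin (i+1) := by simp [nbE, hg.1, hg.2]
      have hdef : ht G D Pmin (i+1) = ht G D Pmin i + (-1)^i * gg D Pmin (east (G.pos i)) := by
        simp [ht, hg.2]
      have hsq : ((-1:ℤ))^i * (-1)^i = 1 := by
        rw [← pow_add]; exact Even.neg_one_pow ⟨i, rfl⟩
      rw [h1, hdef]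
      linear_combination (- gg D Pmin (east (G.pos i))) * hsq
    · have key := G.eq_SE D Pmin hD hP hi
      rw [if_neg hg] at key
      have hnbE : nbE G D Pmin i = 0 := by simp only [nbE, if_neg hg]
      rw [hS] at key
      rw [hnbE]
      by_cases hg2 : 0 < i ∧ ¬ G.stepE (i-1)
      · rw [if_pos hg2] at key
        obtain ⟨k, rfl⟩ : ∃ k, i = k + 1 := ⟨i - 1, by omega⟩
        simp only [Nat.add_sub_cancel] at key hg2
        have hk := hg2.2
        have hIH2 := IH k (by omega) (by omega)
        rw [hIH2.2.2.1] at key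
        have h3 : nbE G D Pmin k = 0 := by simp [nbE, hk]
        have h4 : nbS G D Pmin (k+1) = ht G D Pmin k := by simp [nbS, hk]
        rw [h3, h4] at key
        linear_combination key
      · rw [if_neg hg2] at key
        have h4 : nbS G D Pmin i = 0 := by simp only [nbS, if_neg hg2]
        rw [h4] at key
        linear_combination key
  have hN : gg D Pmin (north (G.pos i)) = (-1)^i * (ht G D Pmin i - nbN G D Pmin i) := by
    by_cases hg : i + 1 < G.numTiles ∧ ¬ G.stepE i
    · have h1 : nbN G D Pmin i = ht G D Pmin (i+1) := by simp [nbN, hg.1, hg.2]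
      have hdef : ht G D Pmin (i+1) = ht G D Pmin i - (-1)^i * gg D Pmin (north (G.pos i)) := by
        simp [ht, hg.2]
        ring
      have hsq : ((-1:ℤ))^i * (-1)^i = 1 := by
        rw [← pow_add]; exact Even.neg_one_pow ⟨i, rfl⟩
      rw [h1, hdef]
      linear_combination (- gg D Pmin (north (G.pos i))) * hsq
    · have key := G.eq_NW D Pmin hD hP hi
      rw [if_neg hg] at key
      have hnbN : nbN G D Pmin i = 0 := by simp only [nbN, if_neg hg]
      rw [hW] at key
      rw [hnbN]
      by_cases hg2 : 0 < i ∧ G.stepE (i-1)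
      · rw [if_pos hg2] at key
        obtain ⟨k, rfl⟩ : ∃ k, i = k + 1 := ⟨i - 1, by omega⟩
        simp only [Nat.add_sub_cancel] at key hg2
        have hk := hg2.2
        have hIH2 := IH k (by omega) (by omega)
        rw [hIH2.2.2.2] at key
        have h3 : nbN G D Pmin k = 0 := by simp [nbN, hk]
        have h4 : nbW G D Pmin (k+1) = ht G D Pmin k := by simp [nbW, hk]
        rw [h3, h4] at key
        linear_combination key
      · rw [if_neg hg2] at key
        have h4 : nbW G D Pmin i = 0 := by simp only [nbW, if_neg hg2]
        rw [h4] at key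
        linear_combination key
  exact ⟨hW, hS, hE, hN⟩

end SnakeGraph

namespace SnakeGraph

variable (G : SnakeGraph) (D : Multiset SnakeEdge) (Pmin : Finset SnakeEdge)

lemma count_doubled (e : SnakeEdge) :
    (doubled Pmin).count e = if e ∈ Pmin then 2 else 0 := by
  simp only [doubled, Multiset.count_add, count_val_eq]
  split_ifs <;> rfl

lemma count_symmDiff (e : SnakeEdge) :
    (symmDiff D (doubled Pmin)).count e
      = max (D.count e) ((doubled Pmin).count e)
        - min (D.count e) ((doubled Pmin).count e) := by
  simp [symmDiff, Multiset.count_sub, Multiset.count_union, Multiset.count_inter]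

lemma mem_K_iff (e : SnakeEdge) :
    e ∈ symmDiff D (doubled Pmin) ↔ gg D Pmin e ≠ 0 := by
  rw [← Multiset.count_pos, count_symmDiff, count_doubled, gg]
  split_ifs <;> push_cast <;> omega

lemma ends_south (p : ℤ × ℤ) : ends (south p) = {p, (p.1 + 1, p.2)} := by
  simp [ends, south]

lemma ends_north (p : ℤ × ℤ) : ends (north p) = {(p.1, p.2 + 1), (p.1 + 1, p.2 + 1)} := by
  simp [ends, north]

lemma ends_west (p : ℤ × ℤ) : ends (west p) = {p, (p.1, p.2 + 1)} := by
  simp [ends, west]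

lemma ends_east (p : ℤ × ℤ) : ends (east p) = {(p.1 + 1, p.2), (p.1 + 1, p.2 + 1)} := by
  simp [ends, east]

lemma ends_tile {p : ℤ × ℤ} {e : SnakeEdge} (h : e ∈ tileEdges p) :
    ∀ v ∈ ends e, v ∈ tileVertices p := by
  simp only [tileEdges, Finset.mem_insert, Finset.mem_singleton] at h
  intro v hv
  rcases h with rfl | rfl | rfl | rfl
  · rw [ends_south] at hv
    simp only [Finset.mem_insert, Finset.mem_singleton] at hv
    rcases hv with rfl | rfl <;> simp [tileVertices]
  · rw [ends_north] at hv
    simp only [Finset.mem_insert, Finset.mem_singleton] at hv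
    rcases hv with rfl | rfl <;> simp [tileVertices]
  · rw [ends_west] at hv
    simp only [Finset.mem_insert, Finset.mem_singleton] at hv
    rcases hv with rfl | rfl <;> simp [tileVertices]
  · rw [ends_east] at hv
    simp only [Finset.mem_insert, Finset.mem_singleton] at hv
    rcases hv with rfl | rfl <;> simp [tileVertices]

lemma self_mem_ends (e : SnakeEdge) : e.1 ∈ ends e := by
  rcases e with ⟨p, b⟩; cases b <;> simp [ends]

lemma ends_subset_vertices {e : SnakeEdge} (he : e ∈ G.edges) :
    ∀ v ∈ ends e, v ∈ G.vertices := by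
  obtain ⟨i, hi, hmem⟩ := (G.mem_edges_iff).1 he
  intro v hv
  simp only [vertices, Finset.mem_biUnion]
  exact ⟨G.pos i, (G.mem_tiles).2 ⟨i, hi, rfl⟩, ends_tile hmem v hv⟩

lemma count_D_le_two (hD : G.IsDoubleDimerCover D) (e : SnakeEdge) : D.count e ≤ 2 := by
  by_cases he : e ∈ D
  · have hedge := hD.1 e he
    have hv : e.1 ∈ ends e := self_mem_ends e
    have hvv : e.1 ∈ G.vertices := G.ends_subset_vertices hedge e.1 hv
    have h2 := hD.2 e.1 hvv
    calc D.count e = Multiset.card (D.filter fun x => e = x) :=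
          Multiset.count_eq_card_filter_eq D e
      _ ≤ Multiset.card (D.filter fun x => e.1 ∈ ends x) := by
          apply Multiset.card_le_card
          apply Multiset.monotone_filter_right
          intro x hx
          subst hx
          exact hv
      _ = 2 := h2
  · simp [Multiset.count_eq_zero_of_notMem he]

lemma count_K_le_two (hD : G.IsDoubleDimerCover D) (e : SnakeEdge) :
    (symmDiff D (doubled Pmin)).count e ≤ 2 := by
  rw [count_symmDiff, count_doubled]
  have := G.count_D_le_two D hD e
  split_ifs <;> omega

lemma mem_K_edges (hD : G.IsDoubleDimerCover D) (hP : G.IsPerfectMatching Pmin)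
    {e : SnakeEdge} (he : e ∈ symmDiff D (doubled Pmin)) : e ∈ G.edges := by
  by_contra h
  exact (mem_K_iff D Pmin e).1 he (G.gg_eq_zero D Pmin hD hP h)

lemma count_completion_le (H : Multiset SnakeEdge) (hH : ∀ e, H.count e ≤ 2) (e : SnakeEdge) :
    (G.completion H).count e ≤ 2 := by
  rw [completion, Multiset.count_add]
  by_cases hf : e ∈ (G.edges.filter fun e =>
      e ∉ H ∧ ∃ p ∈ G.tiles, e ∈ tileEdges p ∧ ∃ e' ∈ G.tileBoundary p, e' ∈ H)
  · have he1 : e ∉ H := (Finset.mem_filter.1 hf).2.1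
    rw [Multiset.count_eq_zero.2 he1]
    have h1 : Multiset.count e (G.edges.filter fun e =>
        e ∉ H ∧ ∃ p ∈ G.tiles, e ∈ tileEdges p ∧ ∃ e' ∈ G.tileBoundary p, e' ∈ H).val = 1 :=
      Multiset.count_eq_one_of_mem (Finset.nodup _) hf
    omega
  · have h1 : Multiset.count e (G.edges.filter fun e =>
        e ∉ H ∧ ∃ p ∈ G.tiles, e ∈ tileEdges p ∧ ∃ e' ∈ G.tileBoundary p, e' ∈ H).val = 0 :=
      Multiset.count_eq_zero_of_notMem hf
    have := hH e
    omega

end SnakeGraph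

namespace SnakeGraph

variable (G : SnakeGraph) (D : Multiset SnakeEdge) (Pmin : Finset SnakeEdge)

lemma west_eq_east_pred {i : ℕ} (hi : i < G.numTiles) (h0 : 0 < i) (he : G.stepE (i-1)) :
    west (G.pos i) = east (G.pos (i-1)) := by
  rw [show east (G.pos (i-1)) = (((G.pos (i-1)).1 + 1, (G.pos (i-1)).2), false) from rfl,
    G.pos_pred_east hi h0 he]
  simp [west, Prod.ext_iff]

lemma south_eq_north_pred {i : ℕ} (hi : i < G.numTiles) (h0 : 0 < i) (he : ¬ G.stepE (i-1)) :
    south (G.pos i) = north (G.pos (i-1)) := by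
  rw [show north (G.pos (i-1)) = (((G.pos (i-1)).1, (G.pos (i-1)).2 + 1), true) from rfl,
    G.pos_pred_north hi h0 he]
  simp [south, Prod.ext_iff]

lemma east_eq_west_succ {i : ℕ} (hi : i + 1 < G.numTiles) (he : G.stepE i) :
    east (G.pos i) = west (G.pos (i+1)) := by
  rw [show west (G.pos (i+1)) = (G.pos (i+1), false) from rfl, G.pos_succ_east hi he]
  rfl

lemma north_eq_south_succ {i : ℕ} (hi : i + 1 < G.numTiles) (he : ¬ G.stepE i) :
    north (G.pos i) = south (G.pos (i+1)) := by
  rw [show south (G.pos (i+1)) = (G.pos (i+1), true) from rfl, G.pos_succ_north hi he]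
  rfl

lemma K_subset_T (hD : G.IsDoubleDimerCover D) (hP : G.IsPerfectMatching Pmin)
    {e : SnakeEdge} (he : e ∈ symmDiff D (doubled Pmin)) :
    ∃ i, i < G.numTiles ∧ ht G D Pmin i ≠ 0 ∧ e ∈ tileEdges (G.pos i) := by
  obtain ⟨i, hi, hmem⟩ := (G.mem_edges_iff).1 (G.mem_K_edges D Pmin hD hP he)
  have hgg : gg D Pmin e ≠ 0 := (mem_K_iff D Pmin e).1 he
  have hQ := G.main_lemma D Pmin hD hP i hi
  by_cases hh : ht G D Pmin i = 0
  case neg => exact ⟨i, hi, hh, hmem⟩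
  simp only [tileEdges, Finset.mem_insert, Finset.mem_singleton] at hmem
  rcases hmem with rfl | rfl | rfl | rfl
  · rw [hQ.2.1, hh] at hgg
    have hnb : nbS G D Pmin i ≠ 0 := fun h0 => hgg (by rw [h0]; ring)
    have hguard : 0 < i ∧ ¬ G.stepE (i-1) := by
      by_contra hg; rw [nbS, if_neg hg] at hnb; exact hnb rfl
    refine ⟨i-1, by omega, ?_, ?_⟩
    · rw [nbS, if_pos hguard] at hnb; exact hnb
    · rw [G.south_eq_north_pred hi hguard.1 hguard.2]
      simp [tileEdges]
  · rw [hQ.2.2.2, hh] at hgg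
    have hnb : nbN G D Pmin i ≠ 0 := fun h0 => hgg (by rw [h0]; ring)
    have hguard : i + 1 < G.numTiles ∧ ¬ G.stepE i := by
      by_contra hg; rw [nbN, if_neg hg] at hnb; exact hnb rfl
    refine ⟨i+1, hguard.1, ?_, ?_⟩
    · rw [nbN, if_pos hguard] at hnb; exact hnb
    · rw [G.north_eq_south_succ hguard.1 hguard.2]
      simp [tileEdges]
  · rw [hQ.1, hh] at hgg
    have hnb : nbW G D Pmin i ≠ 0 := fun h0 => hgg (by rw [h0]; ring)
    have hguard : 0 < i ∧ G.stepE (i-1) := by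
      by_contra hg; rw [nbW, if_neg hg] at hnb; exact hnb rfl
    refine ⟨i-1, by omega, ?_, ?_⟩
    · rw [nbW, if_pos hguard] at hnb; exact hnb
    · rw [G.west_eq_east_pred hi hguard.1 hguard.2]
      simp [tileEdges]
  · rw [hQ.2.2.1, hh] at hgg
    have hnb : nbE G D Pmin i ≠ 0 := fun h0 => hgg (by rw [h0]; ring)
    have hguard : i + 1 < G.numTiles ∧ G.stepE i := by
      by_contra hg; rw [nbE, if_neg hg] at hnb; exact hnb rfl
    refine ⟨i+1, hguard.1, ?_, ?_⟩
    · rw [nbE, if_pos hguard] at hnb; exact hnb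
    · rw [G.east_eq_west_succ hguard.1 hguard.2]
      simp [tileEdges]

lemma not_boundary_of_two {i j : ℕ} (hi : i < G.numTiles) (hj : j < G.numTiles)
    (hij : G.pos i ≠ G.pos j) {e : SnakeEdge}
    (h1 : e ∈ tileEdges (G.pos i)) (h2 : e ∈ tileEdges (G.pos j)) :
    e ∉ G.boundaryEdges := by
  intro hb
  rw [boundaryEdges, Finset.mem_filter] at hb
  have hsub : ({G.pos i, G.pos j} : Finset (ℤ × ℤ)) ⊆
      G.tiles.filter (fun p => e ∈ tileEdges p) := by
    intro q hq
    rw [Finset.mem_insert, Finset.mem_singleton] at hq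
    rcases hq with rfl | rfl <;> rw [Finset.mem_filter]
    · exact ⟨(G.mem_tiles).2 ⟨i, hi, rfl⟩, h1⟩
    · exact ⟨(G.mem_tiles).2 ⟨j, hj, rfl⟩, h2⟩
  have hc := Finset.card_le_card hsub
  rw [Finset.card_insert_of_notMem (by simpa using hij), Finset.card_singleton] at hc
  have := hb.2
  omega

lemma ht_ne_of_boundary (hD : G.IsDoubleDimerCover D) (hP : G.IsPerfectMatching Pmin)
    {i : ℕ} (hi : i < G.numTiles) {e' : SnakeEdge}
    (hb : e' ∈ G.tileBoundary (G.pos i)) (hk : e' ∈ symmDiff D (doubled Pmin)) :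
    ht G D Pmin i ≠ 0 := by
  rw [tileBoundary, Finset.mem_inter] at hb
  obtain ⟨hte, hbd⟩ := hb
  have hgg := (mem_K_iff D Pmin e').1 hk
  have hQ := G.main_lemma D Pmin hD hP i hi
  simp only [tileEdges, Finset.mem_insert, Finset.mem_singleton] at hte
  rcases hte with rfl | rfl | rfl | rfl
  · have hnb : nbS G D Pmin i = 0 := by
      rw [nbS, if_neg]
      rintro ⟨h0, hns⟩
      have hne : G.pos i ≠ G.pos (i-1) := by
        rw [G.pos_pred_north hi h0 hns]
        intro hc
        have h2 := congrArg Prod.snd hc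
        simp at h2
        omega
      exact G.not_boundary_of_two hi (by omega) hne (by simp [tileEdges])
        (by rw [G.south_eq_north_pred hi h0 hns]; simp [tileEdges]) hbd
    intro h0ht
    exact hgg (by rw [hQ.2.1, hnb, h0ht]; ring)
  · have hnb : nbN G D Pmin i = 0 := by
      rw [nbN, if_neg]
      rintro ⟨h1, hns⟩
      have hne : G.pos i ≠ G.pos (i+1) := by
        rw [G.pos_succ_north h1 hns]
        intro hc
        have h2 := congrArg Prod.snd hc
        simp at h2
      exact G.not_boundary_of_two hi h1 hne (by simp [tileEdges])
        (by rw [G.north_eq_south_succ h1 hns]; simp [tileEdges]) hbd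
    intro h0ht
    exact hgg (by rw [hQ.2.2.2, hnb, h0ht]; ring)
  · have hnb : nbW G D Pmin i = 0 := by
      rw [nbW, if_neg]
      rintro ⟨h0, hns⟩
      have hne : G.pos i ≠ G.pos (i-1) := by
        rw [G.pos_pred_east hi h0 hns]
        intro hc
        have h2 := congrArg Prod.fst hc
        simp at h2
        omega
      exact G.not_boundary_of_two hi (by omega) hne (by simp [tileEdges])
        (by rw [G.west_eq_east_pred hi h0 hns]; simp [tileEdges]) hbd
    intro h0ht
    exact hgg (by rw [hQ.1, hnb, h0ht]; ring)
  · have hnb : nbE G D Pmin i = 0 := by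
      rw [nbE, if_neg]
      rintro ⟨h1, hns⟩
      have hne : G.pos i ≠ G.pos (i+1) := by
        rw [G.pos_succ_east h1 hns]
        intro hc
        have h2 := congrArg Prod.fst hc
        simp at h2
      exact G.not_boundary_of_two hi h1 hne (by simp [tileEdges])
        (by rw [G.east_eq_west_succ h1 hns]; simp [tileEdges]) hbd
    intro h0ht
    exact hgg (by rw [hQ.2.2.1, hnb, h0ht]; ring)

lemma exists_boundary_K (hD : G.IsDoubleDimerCover D) (hP : G.IsPerfectMatching Pmin)
    {i : ℕ} (hi : i < G.numTiles) (hne : ht G D Pmin i ≠ 0) :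
    ∃ e' ∈ G.tileBoundary (G.pos i), e' ∈ symmDiff D (doubled Pmin) := by
  have hQ := G.main_lemma D Pmin hD hP i hi
  by_cases hg : 0 < i ∧ G.stepE (i-1)
  · refine ⟨south (G.pos i), ?_, ?_⟩
    · rw [tileBoundary, Finset.mem_inter]
      refine ⟨by simp [tileEdges], ?_⟩
      rw [boundaryEdges, Finset.mem_filter]
      refine ⟨(G.mem_edges_iff).2 ⟨i, hi, by simp [tileEdges]⟩, ?_⟩
      have hone : G.tiles.filter (fun p => south (G.pos i) ∈ tileEdges p) = {G.pos i} := by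
        ext q
        rw [Finset.mem_filter, Finset.mem_singleton]
        constructor
        · rintro ⟨hq, hmq⟩
          rcases (mem_tileEdges_horiz).1 hmq with rfl | rfl
          · rfl
          · exact absurd hg.2 ((G.south_nb_iff hi).1 hq).2
        · rintro rfl
          exact ⟨(G.mem_tiles).2 ⟨i, hi, rfl⟩, by simp [tileEdges]⟩
      rw [hone, Finset.card_singleton]
    · rw [mem_K_iff]
      have hnb : nbS G D Pmin i = 0 := by
        rw [nbS, if_neg]; rintro ⟨h0, hns⟩; exact hns hg.2
      rw [hQ.2.1, hnb]
      intro hc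
      rcases mul_eq_zero.1 hc with h | h
      · exact pow_ne_zero i (by norm_num : (-1:ℤ) ≠ 0) h
      · omega
  · refine ⟨west (G.pos i), ?_, ?_⟩
    · rw [tileBoundary, Finset.mem_inter]
      refine ⟨by simp [tileEdges], ?_⟩
      rw [boundaryEdges, Finset.mem_filter]
      refine ⟨(G.mem_edges_iff).2 ⟨i, hi, by simp [tileEdges]⟩, ?_⟩
      have hone : G.tiles.filter (fun p => west (G.pos i) ∈ tileEdges p) = {G.pos i} := by
        ext q
        rw [Finset.mem_filter, Finset.mem_singleton]
        constructor
        · rintro ⟨hq, hmq⟩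
          rcases (mem_tileEdges_vert).1 hmq with rfl | rfl
          · rfl
          · exact absurd ((G.west_nb_iff hi).1 hq) hg
        · rintro rfl
          exact ⟨(G.mem_tiles).2 ⟨i, hi, rfl⟩, by simp [tileEdges]⟩
      rw [hone, Finset.card_singleton]
    · rw [mem_K_iff]
      have hnb : nbW G D Pmin i = 0 := by rw [nbW, if_neg hg]
      rw [hQ.1, hnb]
      intro hc
      rcases mul_eq_zero.1 hc with h | h
      · exact pow_ne_zero i (by norm_num : (-1:ℤ) ≠ 0) h
      · omega

lemma completion_toFinset_eq (hD : G.IsDoubleDimerCover D) (hP : G.IsPerfectMatching Pmin) :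
    (G.completion (symmDiff D (doubled Pmin))).toFinset
      = ((Finset.range G.numTiles).filter (fun i => ht G D Pmin i ≠ 0)).biUnion
          (fun i => tileEdges (G.pos i)) := by
  ext e
  rw [completion, Multiset.toFinset_add]
  simp only [Finset.mem_union, Multiset.mem_toFinset, Finset.val_toFinset]
  constructor
  · rintro (hK | hF)
    · obtain ⟨i, hi, hne, hmem⟩ := G.K_subset_T D Pmin hD hP hK
      exact Finset.mem_biUnion.2 ⟨i, Finset.mem_filter.2 ⟨Finset.mem_range.2 hi, hne⟩, hmem⟩
    · rw [Finset.mem_filter] at hF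
      obtain ⟨hedge, -, p, hp, hmem, e', hb', hk'⟩ := hF
      obtain ⟨i, hi, rfl⟩ := (G.mem_tiles).1 hp
      exact Finset.mem_biUnion.2 ⟨i, Finset.mem_filter.2 ⟨Finset.mem_range.2 hi,
        G.ht_ne_of_boundary D Pmin hD hP hi hb' hk'⟩, hmem⟩
  · intro h
    obtain ⟨i, hfi, hmem⟩ := Finset.mem_biUnion.1 h
    rw [Finset.mem_filter, Finset.mem_range] at hfi
    by_cases hK : e ∈ symmDiff D (doubled Pmin)
    · exact Or.inl hK
    · refine Or.inr (Finset.mem_filter.2 ⟨(G.mem_edges_iff).2 ⟨i, hfi.1, hmem⟩, hK,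
        G.pos i, (G.mem_tiles).2 ⟨i, hfi.1, rfl⟩, hmem, ?_⟩)
      exact G.exists_boundary_K D Pmin hD hP hfi.1 hfi.2

end SnakeGraph

open SnakeGraph in
/-- Let `G` be a snake graph, `D` a double dimer cover of `G` and `D_min`
the minimal double dimer cover (two copies of each edge of the minimal perfect matching).
Then the symmetric difference `D ⊖ D_min` consists of (single or double) edges enclosing
sets of consecutive tiles of `G`, and its completion `(D ⊖ D_min)^c` is a snake
sub-multigraph of the doubled graph of `G`. -/
theorem completion_symmDiff_isSnakeSubMultigraph
    (G : SnakeGraph) (Pmin : Finset SnakeEdge) (hmin : G.IsMinimalMatching Pmin)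
    (D : Multiset SnakeEdge) (hD : G.IsDoubleDimerCover D) :
    G.IsSnakeSubMultigraph (G.completion (symmDiff D (doubled Pmin))) := by
  classical
  have hP : G.IsPerfectMatching Pmin := hmin.1
  constructor
  · exact G.count_completion_le _ (G.count_K_le_two D Pmin hD)
  · refine ⟨(Finset.range G.numTiles ×ˢ Finset.range G.numTiles).filter (fun q =>
      q.1 ≤ q.2 ∧ (∀ k ∈ Finset.Icc q.1 q.2, ht G D Pmin k ≠ 0) ∧
      ¬(0 < q.1 ∧ ht G D Pmin (q.1 - 1) ≠ 0) ∧
      ¬(q.2 + 1 < G.numTiles ∧ ht G D Pmin (q.2 + 1) ≠ 0)), ?_, ?_, ?_⟩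
    · intro p hp
      simp only [Finset.mem_filter, Finset.mem_product, Finset.mem_range] at hp
      exact ⟨hp.2.1, hp.1.2⟩
    · intro p hp q hq hne
      simp only [Finset.mem_filter, Finset.mem_product, Finset.mem_range] at hp hq
      obtain ⟨⟨hp1, hp2⟩, hple, hpall, hpstart, hpend⟩ := hp
      obtain ⟨⟨hq1, hq2⟩, hqle, hqall, hqstart, hqend⟩ := hq
      by_contra hcon
      push_neg at hcon
      obtain ⟨hc1, hc2⟩ := hcon
      apply hne
      have h11 : p.1 = q.1 := by
        rcases lt_trichotomy p.1 q.1 with h | h | h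
        · exact absurd ⟨by omega,
            hpall (q.1 - 1) (Finset.mem_Icc.2 ⟨by omega, by omega⟩)⟩ hqstart
        · exact h
        · exact absurd ⟨by omega,
            hqall (p.1 - 1) (Finset.mem_Icc.2 ⟨by omega, by omega⟩)⟩ hpstart
      have h22 : p.2 = q.2 := by
        rcases lt_trichotomy p.2 q.2 with h | h | h
        · exact absurd ⟨by omega,
            hqall (p.2 + 1) (Finset.mem_Icc.2 ⟨by omega, by omega⟩)⟩ hpend
        · exact h
        · exact absurd ⟨by omega,
            hpall (q.2 + 1) (Finset.mem_Icc.2 ⟨by omega, by omega⟩)⟩ hqend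
      exact Prod.ext h11 h22
    · rw [G.completion_toFinset_eq D Pmin hD hP]
      ext e
      constructor
      · intro h
        obtain ⟨i, hfi, hmem⟩ := Finset.mem_biUnion.1 h
        rw [Finset.mem_filter, Finset.mem_range] at hfi
        obtain ⟨hi, hne⟩ := hfi
        set A := (Finset.range (i+1)).filter
            (fun a => ∀ k ∈ Finset.Icc a i, ht G D Pmin k ≠ 0) with hA
        have hAne : i ∈ A := by
          refine Finset.mem_filter.2 ⟨Finset.mem_range.2 (by omega), fun k hk => ?_⟩
          rw [Finset.mem_Icc] at hk
          have hki : k = i := by omega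
          subst hki; exact hne
        have hAnonempty : A.Nonempty := ⟨i, hAne⟩
        set a := A.min' hAnonempty with ha
        have haA : a ∈ A := A.min'_mem hAnonempty
        obtain ⟨halt', hall⟩ := Finset.mem_filter.1 haA
        have halt := Finset.mem_range.1 halt'
        have hastart : ¬(0 < a ∧ ht G D Pmin (a - 1) ≠ 0) := by
          rintro ⟨h0, hne'⟩
          have hmem' : a - 1 ∈ A := by
            refine Finset.mem_filter.2 ⟨Finset.mem_range.2 (by omega), fun k hk => ?_⟩
            rw [Finset.mem_Icc] at hk
            rcases eq_or_lt_of_le hk.1 with heq | hlt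
            · rw [← heq]; exact hne'
            · exact hall k (Finset.mem_Icc.2 ⟨by omega, hk.2⟩)
          have h2 : a ≤ a - 1 := A.min'_le _ hmem'
          omega
        set B := (Finset.range G.numTiles).filter
            (fun b => i ≤ b ∧ ∀ k ∈ Finset.Icc i b, ht G D Pmin k ≠ 0) with hB
        have hBne : i ∈ B := by
          refine Finset.mem_filter.2 ⟨Finset.mem_range.2 hi, le_refl i, fun k hk => ?_⟩
          rw [Finset.mem_Icc] at hk
          have hki : k = i := by omega
          subst hki; exact hne
        have hBnonempty : B.Nonempty := ⟨i, hBne⟩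
        set b := B.max' hBnonempty with hb
        have hbB : b ∈ B := B.max'_mem hBnonempty
        obtain ⟨hblt', hbge, hball⟩ := Finset.mem_filter.1 hbB
        have hblt := Finset.mem_range.1 hblt'
        have hbend : ¬(b + 1 < G.numTiles ∧ ht G D Pmin (b + 1) ≠ 0) := by
          rintro ⟨h1, hne'⟩
          have hmem' : b + 1 ∈ B := by
            refine Finset.mem_filter.2 ⟨Finset.mem_range.2 h1, by omega, fun k hk => ?_⟩
            rw [Finset.mem_Icc] at hk
            rcases eq_or_lt_of_le hk.2 with heq | hlt
            · rw [heq]; exact hne'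
            · exact hball k (Finset.mem_Icc.2 ⟨hk.1, by omega⟩)
          have h2 : b + 1 ≤ b := B.le_max' _ hmem'
          omega
        refine Finset.mem_biUnion.2 ⟨(a, b), Finset.mem_filter.2
          ⟨Finset.mem_product.2 ⟨Finset.mem_range.2 (by omega), Finset.mem_range.2 hblt⟩,
            by omega, fun k hk => ?_, hastart, hbend⟩, ?_⟩
        · rw [Finset.mem_Icc] at hk
          rcases le_or_gt k i with hki | hki
          · exact hall k (Finset.mem_Icc.2 ⟨hk.1, hki⟩)
          · exact hball k (Finset.mem_Icc.2 ⟨by omega, hk.2⟩)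
        · show e ∈ G.intervalEdges a b
          rw [intervalEdges]
          exact Finset.mem_biUnion.2 ⟨i, Finset.mem_Icc.2 ⟨by omega, by omega⟩, hmem⟩
      · intro h
        obtain ⟨q, hq, hmem⟩ := Finset.mem_biUnion.1 h
        rw [Finset.mem_filter, Finset.mem_product] at hq
        obtain ⟨⟨hq1, hq2⟩, hqle, hqall, -, -⟩ := hq
        rw [intervalEdges] at hmem
        obtain ⟨k, hk, hmem⟩ := Finset.mem_biUnion.1 hmem
        rw [Finset.mem_range] at hq2
        refine Finset.mem_biUnion.2 ⟨k, Finset.mem_filter.2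
          ⟨Finset.mem_range.2 ?_, hqall k hk⟩, hmem⟩
        rw [Finset.mem_Icc] at hk
        omega
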